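/- For signatures μ ∈ ℤ^N and λ ∈ ℤ^{N+1} (weakly decreasing), the branching of rational Schur functions satisfies the Gelfand–Tsetlin rule: s_λ(u₁,…,u_N, v) = ∑_{μ ≺ λ} s_μ(u₁,…,u_N) · v^{|λ|-|μ|}, where μ ≺ λ means λ_i ≥ μ_i ≥ λ_{i+1} for i = 1,…,N, and |λ| = ∑λ_i, |μ| = ∑μ_i. -/

import Mathlib

open Finset

/-- Rational Schur function s_λ(u₁,…,u_n) = det[uᵢ^{λ_j+n-j}] / ∏_{i<j}(uᵢ-u_j). -/
noncomputable def schur {n : ℕ} (lam : Fin n → ℤ) (u : Fin n → ℂ) : ℂ :=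
  (Matrix.det (Matrix.of fun i j : Fin n => u i ^ (lam j + (n : ℤ) - 1 - (j : ℤ)))) /
    ∏ i : Fin n, ∏ j ∈ Finset.Ioi i, (u i - u j)

lemma zpow_sum_aux {ι : Type*} (v : ℂ) (hv : v ≠ 0) (s : Finset ι) (f : ι → ℤ) :
    ∏ i ∈ s, v ^ f i = v ^ (∑ i ∈ s, f i) := by
  classical
  induction s using Finset.induction with
  | empty => simp
  | insert _ _ h ih => simp [Finset.prod_insert h, Finset.sum_insert h, zpow_add₀ hv, ih]

lemma geom_zpow (u v : ℂ) (hu : u ≠ 0) (hv : v ≠ 0) (b : ℤ) :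
    ∀ a : ℤ, b ≤ a → u ^ (a + 1) - v ^ (a + 1 - b) * u ^ b
      = (u - v) * ∑ c ∈ Finset.Icc b a, v ^ (a - c) * u ^ c := by
  refine Int.le_induction ?_ ?_
  · have h : b + 1 - b = (1 : ℤ) := by ring
    simp [h, zpow_add₀ hu, sub_mul]
    ring
  · intro a hba ih
    have hins : Finset.Icc b (a + 1) = insert (a + 1) (Finset.Icc b a) := by
      ext x; simp only [Finset.mem_Icc, Finset.mem_insert]; omega
    rw [hins, Finset.sum_insert (by simp), mul_add]
    have expand : ∀ c ∈ Finset.Icc b a, v ^ (a + 1 - c) * u ^ c = v * (v ^ (a - c) * u ^ c) := by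
      intro c _
      rw [show a + 1 - c = 1 + (a - c) by ring, zpow_add₀ hv, zpow_one]; ring
    rw [Finset.sum_congr rfl expand, ← Finset.mul_sum,
      show (u - v) * (v * ∑ c ∈ Finset.Icc b a, v ^ (a - c) * u ^ c)
        = v * ((u - v) * ∑ c ∈ Finset.Icc b a, v ^ (a - c) * u ^ c) by ring, ← ih]
    rw [show a + 1 + 1 = (a + 1) + 1 by ring, zpow_add₀ hu (a+1) 1,
      show a + 1 + 1 - b = 1 + (a + 1 - b) by ring, zpow_add₀ hv, zpow_one, zpow_one,
      show a + 1 - (a + 1) = (0:ℤ) by ring, zpow_zero]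
    ring

lemma col_expand (u v : ℂ) (hu : u ≠ 0) (hv : v ≠ 0) (p q s : ℤ) (h : q ≤ p) :
    u ^ (p + s + 1) - v ^ (p - q + 1) * u ^ (q + s)
      = (u - v) * ∑ c ∈ Finset.Icc q p, v ^ (p - c) * u ^ (c + s) := by
  have := geom_zpow u v hu hv (q + s) (p + s) (by omega)
  rw [show p + s + 1 - (q + s) = p - q + 1 by ring] at this
  rw [this, ← Finset.map_add_right_Icc q p s, Finset.sum_map]
  congr 1
  refine Finset.sum_congr rfl fun c _ => ?_
  simp only [addRightEmbedding_apply]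
  rw [show p + s - (c + s) = p - c by ring]

lemma Ioi_castSucc_eq (N : ℕ) (i : Fin N) :
    (Finset.Ioi (i.castSucc) : Finset (Fin (N + 1)))
      = insert (Fin.last N) ((Finset.Ioi i).map Fin.castSuccEmb) := by
  ext j
  simp only [Finset.mem_Ioi, Finset.mem_insert, Finset.mem_map,
    Fin.castSuccEmb_apply]
  constructor
  · intro hij
    rcases eq_or_ne j (Fin.last N) with rfl | hne
    · exact Or.inl rfl
    · obtain ⟨y, rfl⟩ := Fin.exists_castSucc_eq.2 hne
      exact Or.inr ⟨y, by simpa using hij, rfl⟩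
  · rintro (rfl | ⟨y, hy, rfl⟩)
    · exact Fin.castSucc_lt_last i
    · simpa using hy

lemma vand_split (N : ℕ) (w : Fin (N + 1) → ℂ) :
    (∏ i : Fin (N + 1), ∏ j ∈ Finset.Ioi i, (w i - w j))
      = ((∏ i : Fin N, ∏ j ∈ Finset.Ioi i, (w i.castSucc - w j.castSucc))
          * ∏ i : Fin N, (w i.castSucc - w (Fin.last N))) := by
  rw [Fin.prod_univ_castSucc]
  have hlast : (Finset.Ioi (Fin.last N) : Finset (Fin (N+1))) = ∅ := by
    ext j; simp [Fin.le_last j, not_lt.mpr]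
  rw [hlast, Finset.prod_empty, mul_one, ← Finset.prod_mul_distrib]
  refine Finset.prod_congr rfl fun i _ => ?_
  rw [Ioi_castSucc_eq, Finset.prod_insert (by simp [Fin.exists_castSucc_eq, Fin.ext_iff]), Finset.prod_map,
    mul_comm]
  rfl

lemma det_scale (N : ℕ) (f g : Fin N → ℂ) (A : Fin N → Fin N → ℂ) :
    Matrix.det (Matrix.of fun i j => f i * (g j * A i j))
      = (∏ i, f i) * ((∏ j, g j) * Matrix.det (Matrix.of A)) := by
  have h1 := Matrix.det_mul_column f (Matrix.of fun i j : Fin N => g j * A i j)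
  have h2 := Matrix.det_mul_row g (Matrix.of A)
  simp only [Matrix.of_apply] at h1 h2
  rw [h1, h2]

/-- Gelfand–Tsetlin branching rule:
s_λ(u₁,…,u_N,v) = ∑_{μ ≺ λ} s_μ(u₁,…,u_N) v^{|λ|-|μ|}, where μ ≺ λ means
λᵢ ≥ μᵢ ≥ λ_{i+1}. -/
theorem stmt_13 (N : ℕ) (lam : Fin (N + 1) → ℤ) (hlam : Antitone lam)
    (w : Fin (N + 1) → ℂ) (hw0 : ∀ i, w i ≠ 0) (hinj : Function.Injective w) :
    schur lam w =
      ∑ mu ∈ Finset.Icc (fun i : Fin N => lam i.succ) (fun i : Fin N => lam i.castSucc),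
        schur mu (w ∘ Fin.castSucc) *
          (w (Fin.last N)) ^ ((∑ i, lam i) - ∑ i, mu i) := by

  classical
  set v : ℂ := w (Fin.last N) with hvdef
  set u : Fin N → ℂ := w ∘ Fin.castSucc with hudef
  have hvne : v ≠ 0 := hw0 _
  have hune : ∀ i, u i ≠ 0 := fun i => hw0 _
  have huvne : ∀ i : Fin N, u i - v ≠ 0 := fun i =>
    sub_ne_zero.2 fun h => (Fin.castSucc_lt_last i).ne (hinj h)
  set a : Fin (N + 1) → ℤ := fun j => lam j + ((N + 1 : ℕ) : ℤ) - 1 - (j : ℤ) with hadef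
  have ha_cs : ∀ j : Fin N, a j.castSucc = lam j.castSucc + ((N : ℤ) - 1 - (j : ℤ)) + 1 := by
    intro j; simp [hadef, Fin.coe_castSucc]; push_cast; ring
  have ha_s : ∀ j : Fin N, a j.succ = lam j.succ + ((N : ℤ) - 1 - (j : ℤ)) := by
    intro j; simp [hadef, Fin.val_succ]; push_cast; ring
  have ha_last : a (Fin.last N) = lam (Fin.last N) := by
    simp [hadef, Fin.val_last]; push_cast; ring
  set c : Fin N → ℂ := fun j => v ^ (lam j.castSucc - lam j.succ + 1) with hcdef
  set M : Matrix (Fin (N + 1)) (Fin (N + 1)) ℂ := Matrix.of fun i j => w i ^ a j with hMdef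
  set M' : Matrix (Fin (N + 1)) (Fin (N + 1)) ℂ := Matrix.of fun i j =>
    Fin.lastCases (w i ^ a (Fin.last N))
      (fun j' => w i ^ a j'.castSucc - c j' * w i ^ a j'.succ) j with hM'def
  set T : Matrix (Fin (N + 1)) (Fin (N + 1)) ℂ := Matrix.of fun k j =>
    Fin.lastCases (if k = Fin.last N then (1 : ℂ) else 0)
      (fun j' => if k = j'.castSucc then (1 : ℂ) else if k = j'.succ then -c j' else 0) j
    with hTdef
  have hMT : M * T = M' := by
    ext i j
    induction j using Fin.lastCases with
    | last =>
      simp only [Matrix.mul_apply, hTdef, hM'def, Matrix.of_apply, Fin.lastCases_last]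
      simp [mul_ite, hMdef]
    | cast j' =>
      simp only [Matrix.mul_apply, hTdef, hM'def, Matrix.of_apply, Fin.lastCases_castSucc]
      have hsplit : ∀ k : Fin (N + 1),
          M i k * (if k = j'.castSucc then (1 : ℂ) else if k = j'.succ then -c j' else 0)
            = (if k = j'.castSucc then M i k else 0)
              + (if k = j'.succ then -c j' * M i k else 0) := by
        intro k
        by_cases h1 : k = j'.castSucc
        · subst h1
          simp [(Fin.castSucc_lt_succ : j'.castSucc < j'.succ).ne]
        · by_cases h2 : k = j'.succ <;>
            simp [h1, h2, (Fin.castSucc_lt_succ : j'.castSucc < j'.succ).ne', mul_comm]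
      rw [Finset.sum_congr rfl fun k _ => hsplit k, Finset.sum_add_distrib,
        Finset.sum_ite_eq' Finset.univ j'.castSucc, Finset.sum_ite_eq' Finset.univ j'.succ]
      simp [hMdef]
      ring
  have hTtri : T.det = 1 := by
    rw [Matrix.det_of_lowerTriangular T ?_]
    · rw [Finset.prod_eq_one]
      intro j _
      induction j using Fin.lastCases with
      | last => simp [hTdef]
      | cast j' => simp [hTdef]
    · intro i j h
      have hij : i < j := h
      induction j using Fin.lastCases with
      | last => simp [hTdef, hij.ne]
      | cast j' =>
        have h2 : i ≠ j'.succ := fun h' =>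
          absurd (h' ▸ hij) (by simp [Fin.lt_iff_val_lt_val, Fin.val_succ])
        simp [hTdef, hij.ne, h2]
  have hdetMM' : M.det = M'.det := by
    rw [← hMT, Matrix.det_mul, hTtri, mul_one]
  have hlastrow : ∀ j' : Fin N, M' (Fin.last N) j'.castSucc = 0 := by
    intro j'
    rw [hM'def]
    simp only [Matrix.of_apply, Fin.lastCases_castSucc]
    show v ^ a j'.castSucc - v ^ (lam j'.castSucc - lam j'.succ + 1) * v ^ a j'.succ = 0
    rw [← zpow_add₀ hvne, ha_cs, ha_s,
      show lam j'.castSucc - lam j'.succ + 1 + (lam j'.succ + ((N : ℤ) - 1 - (j' : ℤ)))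
        = lam j'.castSucc + ((N : ℤ) - 1 - (j' : ℤ)) + 1 by ring, sub_self]
  set B : Matrix (Fin N) (Fin N) ℂ := M'.submatrix Fin.castSucc Fin.castSucc with hBdef
  have hdetM' : M'.det = v ^ lam (Fin.last N) * B.det := by
    rw [Matrix.det_succ_row M' (Fin.last N), Finset.sum_eq_single (Fin.last N)]
    · have h1 : M' (Fin.last N) (Fin.last N) = v ^ lam (Fin.last N) := by
        rw [hM'def]
        show (Fin.lastCases (w (Fin.last N) ^ a (Fin.last N)) _ (Fin.last N) : ℂ) = _
        rw [Fin.lastCases_last, ha_last]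
      rw [h1, Fin.succAbove_last, Fin.val_last, ← hBdef]
      have h2 : ((-1 : ℂ)) ^ (N + N) = 1 := Even.neg_one_pow (Even.add_self N)
      rw [h2, one_mul]
    · intro j _ hj
      obtain ⟨j', rfl⟩ := Fin.exists_castSucc_eq.2 hj
      rw [hlastrow j', mul_zero, zero_mul]
    · intro h; exact absurd (Finset.mem_univ _) h
  have hB : ∀ i j : Fin N, B i j = u i ^ a j.castSucc - c j * u i ^ a j.succ := by
    intro i j
    rw [hBdef, Matrix.submatrix_apply, hM'def]
    simp only [Matrix.of_apply, Fin.lastCases_castSucc]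
    rfl
  set g : Fin N → ℤ → (Fin N → ℂ) := fun j m i =>
    (u i - v) * (v ^ (lam j.castSucc - m) * u i ^ (m + ((N : ℤ) - 1 - (j : ℤ)))) with hgdef
  have hBT : B.transpose = fun j => ∑ m ∈ Finset.Icc (lam j.succ) (lam j.castSucc), g j m := by
    funext j i
    rw [Matrix.transpose_apply, hB i j]
    have hcol := col_expand (u i) v (hune i) hvne (lam j.castSucc) (lam j.succ)
      ((N : ℤ) - 1 - (j : ℤ)) (hlam (Fin.castSucc_le_succ j))
    rw [ha_cs, ha_s, hcdef, hcol, Finset.mul_sum]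
    rw [Finset.sum_apply]
  set A : Fin N → Finset ℤ := fun j => Finset.Icc (lam j.succ) (lam j.castSucc) with hAdef
  set Nr : (Fin N → ℤ) → ℂ := fun r =>
    (Matrix.of fun i j : Fin N => u i ^ (r j + (N : ℤ) - 1 - (j : ℤ))).det with hNrdef
  have hdetB : B.det = (∏ i, (u i - v)) *
      ∑ r ∈ Fintype.piFinset A, v ^ (∑ j, (lam j.castSucc - r j)) * Nr r := by
    rw [← Matrix.det_transpose B]
    have h0 : B.transpose.det
        = (Matrix.detRowAlternating : (Fin N → ℂ) [⋀^Fin N]→ₗ[ℂ] ℂ) B.transpose := rfl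
    rw [h0, hBT]
    have hms := (Matrix.detRowAlternating :
      (Fin N → ℂ) [⋀^Fin N]→ₗ[ℂ] ℂ).toMultilinearMap.map_sum_finset g A
    simp only [AlternatingMap.coe_multilinearMap] at hms
    rw [hms, Finset.mul_sum]
    refine Finset.sum_congr rfl fun r hr => ?_
    have h1 : (fun j => g j (r j)) = Matrix.of (fun j i : Fin N =>
        (v ^ (lam j.castSucc - r j)) * ((u i - v) * (u i ^ (r j + (N : ℤ) - 1 - (j : ℤ))))) := by
      funext j i
      rw [hgdef]
      simp only [Matrix.of_apply]
      rw [show r j + ((N : ℤ) - 1 - (j : ℤ)) = r j + (N : ℤ) - 1 - (j : ℤ) by ring]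
      ring
    rw [h1]
    have h2 : (Matrix.detRowAlternating (Matrix.of (fun j i : Fin N =>
        (v ^ (lam j.castSucc - r j)) * ((u i - v) * (u i ^ (r j + (N : ℤ) - 1 - (j : ℤ)))))) : ℂ)
        = Matrix.det (Matrix.of (fun j i : Fin N =>
        (v ^ (lam j.castSucc - r j)) * ((u i - v) * (u i ^ (r j + (N : ℤ) - 1 - (j : ℤ)))))) := rfl
    rw [h2, det_scale N (fun j => v ^ (lam j.castSucc - r j)) (fun i => u i - v)
      (fun j i => u i ^ (r j + (N : ℤ) - 1 - (j : ℤ)))]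
    have h3 : Matrix.det (Matrix.of fun j i : Fin N => u i ^ (r j + (N : ℤ) - 1 - (j : ℤ)))
        = Nr r := by
      rw [hNrdef]
      exact Matrix.det_transpose _
    rw [h3, zpow_sum_aux v hvne]
    ring
  set P : ℂ := ∏ i : Fin N, (u i - v) with hPdef
  set Ds : ℂ := ∏ i : Fin N, ∏ j ∈ Finset.Ioi i, (u i - u j) with hDsdef
  have hPne : P ≠ 0 := Finset.prod_ne_zero_iff.2 fun i _ => huvne i
  have hDsne : Ds ≠ 0 := by
    rw [hDsdef]
    refine Finset.prod_ne_zero_iff.2 fun i _ => Finset.prod_ne_zero_iff.2 fun j hj => ?_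
    have hij : i < j := Finset.mem_Ioi.1 hj
    exact sub_ne_zero.2 fun h => (Fin.castSucc_lt_castSucc_iff.2 hij).ne (hinj h)
  set S : ℂ := ∑ r ∈ Fintype.piFinset A, Nr r * v ^ ((∑ i, lam i) - ∑ i, r i) with hSdef
  have hnum : M.det = P * S := by
    rw [hdetMM', hdetM', hdetB, hSdef]
    rw [Finset.mul_sum, Finset.mul_sum, Finset.mul_sum]
    refine Finset.sum_congr rfl fun r hr => ?_
    have he : lam (Fin.last N) + (∑ j, (lam j.castSucc - r j)) = (∑ i, lam i) - ∑ i, r i := by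
      rw [Fin.sum_univ_castSucc (f := lam), Finset.sum_sub_distrib]
      ring
    rw [← he, zpow_add₀ hvne]
    ring
  have hLHS : schur lam w = M.det / (Ds * P) := by
    show Matrix.det (Matrix.of fun i j : Fin (N + 1) =>
        w i ^ (lam j + ((N + 1 : ℕ) : ℤ) - 1 - (j : ℤ)))
      / (∏ i : Fin (N + 1), ∏ j ∈ Finset.Ioi i, (w i - w j)) = M.det / (Ds * P)
    rw [vand_split N w]
    rfl
  have hRHS : (∑ mu ∈ Finset.Icc (fun i : Fin N => lam i.succ) (fun i : Fin N => lam i.castSucc),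
      schur mu u * v ^ ((∑ i, lam i) - ∑ i, mu i)) = S / Ds := by
    rw [hSdef, Finset.sum_div, hAdef]
    rw [show (Finset.Icc (fun i : Fin N => lam i.succ) (fun i : Fin N => lam i.castSucc))
      = Fintype.piFinset (fun i : Fin N => Finset.Icc (lam i.succ) (lam i.castSucc)) from Pi.Icc_eq _ _]
    refine Finset.sum_congr rfl fun r hr => ?_
    show Nr r / Ds * v ^ ((∑ i, lam i) - ∑ i, r i) = _
    rw [div_mul_eq_mul_div]
  rw [hRHS, hLHS, hnum, mul_comm Ds P]
  exact mul_div_mul_left _ _ hPne
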